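/- Let f be a continuous 2π-periodic function with maximum value M attained at x₀, minimum value m, and mean value f̄ = (1/2π)∫_{−π}^{π} f(x) dx, with M > m. Then the fractional Laplacian Λf(x₀) = (1/4π) p.v. ∫_{−π}^{π} (f(x₀) − f(y)) / sin²((x₀−y)/2) dy satisfies Λf(x₀) > ((M−m)/π)·cot(π(f̄−m)/(2(M−m))). -/

import Mathlib

open Real Set Filter Topology MeasureTheory

private lemma aux_sin_sq_eq (a : ℝ) : Real.sin a ^ 2 = Real.sin |a| ^ 2 := by
  rcases abs_cases a with ⟨h, _⟩ | ⟨h, _⟩ <;> rw [h] <;> simp [Real.sin_neg]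

private lemma aux_sin_sq_le {a b : ℝ} (h : |a| ≤ b) (hb : b ≤ π/2) :
    Real.sin a ^ 2 ≤ Real.sin b ^ 2 := by
  rw [aux_sin_sq_eq]
  have hpi := Real.pi_pos
  have h0 : 0 ≤ Real.sin |a| :=
    Real.sin_nonneg_of_nonneg_of_le_pi (abs_nonneg a) (by linarith [abs_nonneg a])
  have h1 : Real.sin |a| ≤ Real.sin b := by
    rcases eq_or_lt_of_le h with h | h
    · rw [h]
    · exact (Real.sin_lt_sin_of_lt_of_le_pi_div_two (by linarith [abs_nonneg a]) hb h).le
  exact pow_le_pow_left₀ h0 h1 2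

private lemma aux_sin_sq_lt {a b : ℝ} (hb0 : 0 ≤ b) (h : b < |a|) (ha : |a| ≤ π/2) :
    Real.sin b ^ 2 < Real.sin a ^ 2 := by
  rw [aux_sin_sq_eq a]
  have hpi := Real.pi_pos
  have h0 : 0 ≤ Real.sin b :=
    Real.sin_nonneg_of_nonneg_of_le_pi hb0 (by linarith)
  have h1 : Real.sin b < Real.sin |a| :=
    Real.sin_lt_sin_of_lt_of_le_pi_div_two (by linarith) ha h
  exact pow_lt_pow_left₀ h1 h0 (by norm_num)

private lemma aux_sin_sq_lt' {a b : ℝ} (h : |a| < b) (hb : b ≤ π/2) :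
    Real.sin a ^ 2 < Real.sin b ^ 2 := by
  rw [aux_sin_sq_eq]
  have hpi := Real.pi_pos
  have h0 : 0 ≤ Real.sin |a| :=
    Real.sin_nonneg_of_nonneg_of_le_pi (abs_nonneg a) (by linarith [abs_nonneg a])
  have h1 : Real.sin |a| < Real.sin b :=
    Real.sin_lt_sin_of_lt_of_le_pi_div_two (by linarith [abs_nonneg a]) hb h
  exact pow_lt_pow_left₀ h1 h0 (by norm_num)

private lemma aux_hasDeriv (x₀ y : ℝ) (hs : Real.sin ((x₀ - y)/2) ≠ 0) :
    HasDerivAt (fun z => 2 * Real.cos ((x₀ - z)/2) / Real.sin ((x₀ - z)/2))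
      (1 / Real.sin ((x₀ - y)/2) ^ 2) y := by
  have hu : HasDerivAt (fun z : ℝ => (x₀ - z)/2) ((-1/2)) y := by
    simpa using ((hasDerivAt_id y).const_sub x₀).div_const 2
  have hc : HasDerivAt (fun z => 2 * Real.cos ((x₀ - z)/2))
      (2 * (-Real.sin ((x₀ - y)/2) * (-1/2))) y :=
    (((Real.hasDerivAt_cos _).comp y hu)).const_mul 2
  have hsn : HasDerivAt (fun z => Real.sin ((x₀ - z)/2))
      (Real.cos ((x₀ - y)/2) * (-1/2)) y := (Real.hasDerivAt_sin _).comp y hu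
  have h := hc.div hsn hs
  refine HasDerivAt.congr_deriv (by exact h) ?_
  have := Real.sin_sq_add_cos_sq ((x₀ - y)/2)
  congr 1
  nlinarith [Real.sin_sq_add_cos_sq ((x₀ - y)/2)]

set_option maxHeartbeats 2000000 in
/-- Lower bound for the half-Laplacian at a maximum point: if a continuous
`2π`-periodic `f` attains its maximum `M` at `x₀`, has minimum `m < M` and mean
`f̄`, then `Λf(x₀) > ((M−m)/π)·cot(π(f̄−m)/(2(M−m)))`. -/
theorem fractional_laplacian_max_lower_bound (f : ℝ → ℝ) (x₀ M m fbar L : ℝ)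
    (hf : Continuous f) (hper : Function.Periodic f (2*π))
    (hmax : ∀ x : ℝ, f x ≤ f x₀) (hM : M = f x₀)
    (hmin : ∀ x : ℝ, m ≤ f x) (hm : ∃ x₁ : ℝ, f x₁ = m)
    (hMm : m < M)
    (hbar : fbar = (1/(2*π)) * ∫ x in (-π)..π, f x)
    (hL : Filter.Tendsto (fun ε : ℝ =>
        (1/(4*π)) * ∫ y in Set.Ioo (x₀ - π) (x₀ + π) \ Set.Ioo (x₀ - ε) (x₀ + ε),
          (f x₀ - f y) / (Real.sin ((x₀ - y)/2))^2)
        (𝓝[>] 0) (𝓝 L)) :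
    L > ((M - m)/π) *
      (Real.cos (π*(fbar - m)/(2*(M - m))) / Real.sin (π*(fbar - m)/(2*(M - m)))) := by
  have hπ : (0:ℝ) < π := Real.pi_pos
  have h2π : (0:ℝ) < 2*π := by linarith
  -- the mean is strictly between m and M
  have hbar' : ∫ x in (-π)..π, f x = 2*π*fbar := by
    rw [hbar]; field_simp
  have hfbarM : fbar < M := by
    obtain ⟨x₁, hx₁⟩ := hm
    obtain ⟨y, hy, hfy⟩ := hper.exists_mem_Ico h2π x₁ (-π)
    have hyπ : y < π := by have := hy.2; linarith
    have hlt : ∫ x in (-π)..π, f x < ∫ x in (-π)..π, (fun _ => M) x :=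
      intervalIntegral.integral_lt_integral_of_continuousOn_of_le_of_exists_lt
        (by linarith) hf.continuousOn continuousOn_const
        (fun x _ => by rw [hM]; exact hmax x)
        ⟨y, ⟨hy.1, hyπ.le⟩, by show f y < M; rw [← hfy, hx₁]; exact hMm⟩
    rw [intervalIntegral.integral_const, hbar', smul_eq_mul,
      show (π - -π) * M = 2*π*M by ring] at hlt
    exact lt_of_mul_lt_mul_left hlt (by positivity)
  have hfbarm : m < fbar := by
    obtain ⟨y, hy, hfy⟩ := hper.exists_mem_Ico h2π x₀ (-π)
    have hyπ : y < π := by have := hy.2; linarith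
    have hlt : ∫ x in (-π)..π, (fun _ => m) x < ∫ x in (-π)..π, f x :=
      intervalIntegral.integral_lt_integral_of_continuousOn_of_le_of_exists_lt
        (by linarith) continuousOn_const hf.continuousOn
        (fun x _ => hmin x)
        ⟨y, ⟨hy.1, hyπ.le⟩, by show m < f y; rw [← hfy, ← hM]; exact hMm⟩
    rw [intervalIntegral.integral_const, hbar', smul_eq_mul,
      show (π - -π) * m = 2*π*m by ring] at hlt
    exact lt_of_mul_lt_mul_left hlt (by positivity)
  set A := M - m with hA_def
  have hA : 0 < A := sub_pos.2 hMm
  set θ := π*(fbar - m)/(2*A) with hθ_def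
  have hθ0 : 0 < θ := div_pos (mul_pos hπ (by linarith)) (by linarith)
  have hθ2 : θ < π/2 := by
    rw [hθ_def, div_lt_iff₀ (by linarith)]
    nlinarith
  have hsθ : 0 < Real.sin θ := Real.sin_pos_of_pos_of_lt_pi hθ0 (by linarith)
  have hcθ : 0 < Real.cos θ := Real.cos_pos_of_mem_Ioo ⟨by linarith, hθ2⟩
  set δ := 2*θ with hδ_def
  have hδ0 : 0 < δ := by linarith
  have hδπ : δ < π := by linarith
  set c := 1 / Real.sin θ ^ 2 with hc_def
  have hc0 : 0 < c := div_pos one_pos (pow_pos hsθ 2)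
  -- notation
  set G : ℝ → ℝ := fun y => f x₀ - f y with hG_def
  set sq : ℝ → ℝ := fun y => Real.sin ((x₀ - y)/2) ^ 2 with hsq_def
  set φ : ℝ → ℝ := fun y => max (c - 1 / sq y) 0 with hφ_def
  set ψ : ℝ → ℝ := fun y => c * G y - A * φ y with hψ_def
  have hGcont : Continuous G := continuous_const.sub hf
  have hG0 : ∀ y, 0 ≤ G y := fun y => sub_nonneg.2 (hmax y)
  have hGA : ∀ y, G y ≤ A := fun y => by
    have h1 := hmin y
    simp only [hG_def, hA_def, ← hM]
    linarith
  have hsinne : ∀ y : ℝ, x₀ - π ≤ y → y ≤ x₀ + π → y ≠ x₀ → Real.sin ((x₀ - y)/2) ≠ 0 := by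
    intro y h1 h2 h3
    rw [Ne, Real.sin_eq_zero_iff_of_lt_of_lt (by linarith) (by linarith)]
    intro h; apply h3; linarith
  have hsqpos : ∀ y : ℝ, Real.sin ((x₀ - y)/2) ≠ 0 → 0 < sq y := by
    intro y h
    exact lt_of_le_of_ne (sq_nonneg _) (Ne.symm (pow_ne_zero 2 h))
  -- key pointwise inequality  ψ ≤ G/sq
  have hkey : ∀ y : ℝ, Real.sin ((x₀ - y)/2) ≠ 0 → ψ y ≤ G y / sq y := by
    intro y hs
    have hsq := hsqpos y hs
    have hKpos : 0 < 1 / sq y := by positivity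
    rw [div_eq_mul_one_div]
    simp only [hψ_def, hφ_def]
    rcases le_total c (1 / sq y) with h | h
    · rw [max_eq_right (by linarith)]
      calc c * G y - A * 0 = c * G y := by ring
        _ ≤ (1 / sq y) * G y := mul_le_mul_of_nonneg_right h (hG0 y)
        _ = G y * (1 / sq y) := mul_comm _ _
    · rw [max_eq_left (by linarith)]
      have h1 : 0 ≤ (A - G y) * (c - 1 / sq y) :=
        mul_nonneg (by linarith [hGA y]) (by linarith)
      nlinarith [h1]
  -- continuity package
  have hpack : ∀ s : Set ℝ, (∀ y ∈ s, Real.sin ((x₀ - y)/2) ≠ 0) →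
      ContinuousOn (fun y => G y / sq y) s ∧ ContinuousOn ψ s ∧ ContinuousOn φ s ∧
        ContinuousOn (fun y => 1 / sq y) s := by
    intro s hs
    have hsqc : Continuous sq := by
      rw [hsq_def]; fun_prop
    have hsqne : ∀ y ∈ s, sq y ≠ 0 := fun y hy => pow_ne_zero 2 (hs y hy)
    have hK : ContinuousOn (fun y => 1 / sq y) s :=
      continuousOn_const.div hsqc.continuousOn hsqne
    have hφc : ContinuousOn φ s := by
      rw [hφ_def]
      exact (continuousOn_const.sub hK).sup continuousOn_const
    have hψc : ContinuousOn ψ s := by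
      rw [hψ_def]
      exact (continuousOn_const.mul hGcont.continuousOn).sub (continuousOn_const.mul hφc)
    exact ⟨hGcont.continuousOn.div hsqc.continuousOn hsqne, hψc, hφc, hK⟩
  -- φ vanishes near x₀
  have hφzero : ∀ y : ℝ, x₀ - δ ≤ y → y ≤ x₀ + δ → y ≠ x₀ → φ y = 0 := by
    intro y h1 h2 h3
    have hs : Real.sin ((x₀ - y)/2) ≠ 0 := hsinne y (by linarith) (by linarith) h3
    have hsq := hsqpos y hs
    have habs : |(x₀ - y)/2| ≤ θ := by
      rw [abs_le]; constructor <;> linarith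
    have hle : sq y ≤ Real.sin θ ^ 2 := aux_sin_sq_le habs hθ2.le
    have hK : c ≤ 1 / sq y := one_div_le_one_div_of_le hsq hle
    simp only [hφ_def]
    rw [max_eq_right (by linarith)]
  -- φ equals c - 1/sq away from x₀
  have hφeq : ∀ y : ℝ, x₀ - π ≤ y → y ≤ x₀ + π → (δ ≤ x₀ - y ∨ δ ≤ y - x₀) →
      φ y = c - 1 / sq y := by
    intro y h1 h2 h3
    have h3' : y ≠ x₀ := by
      rcases h3 with h | h <;> intro he <;> rw [he] at h <;> linarith
    have hs := hsinne y h1 h2 h3'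
    have hsq := hsqpos y hs
    have habs1 : θ ≤ |(x₀ - y)/2| := by
      rcases h3 with h | h
      · rw [abs_of_nonneg (by linarith)]; linarith
      · rw [abs_of_nonpos (by linarith)]; linarith
    have habs2 : |(x₀ - y)/2| ≤ π/2 := by rw [abs_le]; constructor <;> linarith
    have hge : Real.sin θ ^ 2 ≤ sq y := by
      have h4 : Real.sin θ ^ 2 ≤ Real.sin (|(x₀ - y)/2|) ^ 2 :=
        aux_sin_sq_le (by rwa [abs_of_pos hθ0]) habs2
      rwa [← aux_sin_sq_eq] at h4
    have hK : 1 / sq y ≤ c := one_div_le_one_div_of_le (pow_pos hsθ 2) hge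
    simp only [hφ_def]
    rw [max_eq_left (by linarith)]
  -- integral computations
  have hne_seg : ∀ p q : ℝ, x₀ - π ≤ p → q ≤ x₀ + π → (q < x₀ ∨ x₀ < p) →
      ∀ y ∈ Icc p q, Real.sin ((x₀ - y)/2) ≠ 0 := by
    intro p q hp hq hpq y hy
    refine hsinne y (by linarith [hy.1]) (by linarith [hy.2]) ?_
    intro he
    subst he
    rcases hpq with h | h
    · linarith [hy.2]
    · linarith [hy.1]
  have hGexp : ∀ p q : ℝ, ∫ y in p..q, G y = (q - p) * f x₀ - ∫ y in p..q, f y := by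
    intro p q
    simp only [hG_def]
    rw [intervalIntegral.integral_sub (intervalIntegrable_const (c := f x₀))
      (hf.intervalIntegrable _ _), intervalIntegral.integral_const, smul_eq_mul]
  have hIG : ∫ y in (x₀-π)..(x₀+π), G y = 2*π*M - 2*π*fbar := by
    have hshift : ∫ x in (x₀-π)..(x₀+π), f x = ∫ x in (-π)..π, f x := by
      have h := hper.intervalIntegral_add_eq (x₀ - π) (-π)
      rw [show x₀ - π + 2*π = x₀ + π by ring, show -π + 2*π = π by ring] at h
      exact h
    rw [hGexp, hshift, hbar', ← hM]
    ring
  have hne_left : ∀ y ∈ Icc (x₀-π) (x₀-δ), Real.sin ((x₀ - y)/2) ≠ 0 :=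
    hne_seg _ _ le_rfl (by linarith) (Or.inl (by linarith))
  have hne_right : ∀ y ∈ Icc (x₀+δ) (x₀+π), Real.sin ((x₀ - y)/2) ≠ 0 :=
    hne_seg _ _ (by linarith) le_rfl (Or.inr (by linarith))
  have hKint_left : IntervalIntegrable (fun y => 1 / sq y) volume (x₀-π) (x₀-δ) := by
    apply ContinuousOn.intervalIntegrable
    rw [uIcc_of_le (by linarith)]
    exact (hpack _ hne_left).2.2.2
  have hKint_right : IntervalIntegrable (fun y => 1 / sq y) volume (x₀+δ) (x₀+π) := by
    apply ContinuousOn.intervalIntegrable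
    rw [uIcc_of_le (by linarith)]
    exact (hpack _ hne_right).2.2.2
  have hIK_left : ∫ y in (x₀-π)..(x₀-δ), (1 / sq y) = 2 * (Real.cos θ / Real.sin θ) := by
    have hderiv : ∀ y ∈ uIcc (x₀-π) (x₀-δ),
        HasDerivAt (fun z => 2 * Real.cos ((x₀ - z)/2) / Real.sin ((x₀ - z)/2)) (1 / sq y) y := by
      intro y hy
      rw [uIcc_of_le (by linarith)] at hy
      exact aux_hasDeriv x₀ y (hne_left y hy)
    rw [intervalIntegral.integral_eq_sub_of_hasDerivAt hderiv hKint_left,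
      show (x₀ - (x₀ - δ))/2 = θ by rw [hδ_def]; ring,
      show (x₀ - (x₀ - π))/2 = π/2 by ring,
      Real.cos_pi_div_two, Real.sin_pi_div_two]
    ring
  have hIK_right : ∫ y in (x₀+δ)..(x₀+π), (1 / sq y) = 2 * (Real.cos θ / Real.sin θ) := by
    have hderiv : ∀ y ∈ uIcc (x₀+δ) (x₀+π),
        HasDerivAt (fun z => 2 * Real.cos ((x₀ - z)/2) / Real.sin ((x₀ - z)/2)) (1 / sq y) y := by
      intro y hy
      rw [uIcc_of_le (by linarith)] at hy
      exact aux_hasDeriv x₀ y (hne_right y hy)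
    rw [intervalIntegral.integral_eq_sub_of_hasDerivAt hderiv hKint_right,
      show (x₀ - (x₀ + δ))/2 = -θ by rw [hδ_def]; ring,
      show (x₀ - (x₀ + π))/2 = -(π/2) by ring,
      Real.cos_neg, Real.sin_neg, Real.cos_neg, Real.sin_neg,
      Real.cos_pi_div_two, Real.sin_pi_div_two]
    field_simp
    ring
  have hφ_left : ∫ y in (x₀-π)..(x₀-δ), φ y = c*(π-δ) - 2 * (Real.cos θ / Real.sin θ) := by
    have hcongr : EqOn φ (fun y => c - 1 / sq y) (uIcc (x₀-π) (x₀-δ)) := by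
      intro y hy
      rw [uIcc_of_le (by linarith)] at hy
      exact hφeq y hy.1 (by linarith [hy.2]) (Or.inl (by linarith [hy.2]))
    rw [intervalIntegral.integral_congr hcongr,
      intervalIntegral.integral_sub (intervalIntegrable_const (c := c)) hKint_left,
      intervalIntegral.integral_const, hIK_left, smul_eq_mul]
    ring
  have hφ_right : ∫ y in (x₀+δ)..(x₀+π), φ y = c*(π-δ) - 2 * (Real.cos θ / Real.sin θ) := by
    have hcongr : EqOn φ (fun y => c - 1 / sq y) (uIcc (x₀+δ) (x₀+π)) := by
      intro y hy
      rw [uIcc_of_le (by linarith)] at hy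
      exact hφeq y (by linarith [hy.1]) hy.2 (Or.inr (by linarith [hy.1]))
    rw [intervalIntegral.integral_congr hcongr,
      intervalIntegral.integral_sub (intervalIntegrable_const (c := c)) hKint_right,
      intervalIntegral.integral_const, hIK_right, smul_eq_mul]
    ring
  -- strict gain
  obtain ⟨a, b, ha, hab, hb, hstrict⟩ :
      ∃ a b : ℝ, x₀ + δ/2 ≤ a ∧ a < b ∧ b ≤ x₀ + π ∧
        ∀ y ∈ Icc a b, ψ y < G y / sq y := by
    by_cases hcase : f (x₀ + δ) < M
    · -- the maximum is not attained at x₀ + δ : gain just inside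
      have hv : 0 < G (x₀ + δ) := by
        simp only [hG_def]; rw [← hM]; linarith
      have hop : IsOpen (G ⁻¹' Ioi (G (x₀ + δ) / 2)) := isOpen_Ioi.preimage hGcont
      have hmem : (x₀ + δ) ∈ G ⁻¹' Ioi (G (x₀ + δ) / 2) := by
        simp only [Set.mem_preimage, Set.mem_Ioi]; linarith
      obtain ⟨r, hr0, hball⟩ := Metric.isOpen_iff.1 hop _ hmem
      have hρ0 : 0 < min (r/2) (δ/2) := lt_min (by linarith) (by linarith)
      set ρ := min (r/2) (δ/2) with hρ_def
      have hρδ : ρ ≤ δ/2 := min_le_right _ _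
      have hρr : ρ ≤ r/2 := min_le_left _ _
      refine ⟨x₀ + δ - ρ, x₀ + δ - ρ/2, by linarith, by linarith, by linarith, ?_⟩
      intro y hy
      obtain ⟨hy1, hy2⟩ := hy
      have hGy : G (x₀ + δ) / 2 < G y := by
        have : y ∈ Metric.ball (x₀ + δ) r := by
          rw [Metric.mem_ball, Real.dist_eq, abs_lt]
          constructor <;> linarith
        exact hball this
      have hyx : x₀ < y := by linarith
      have hne : Real.sin ((x₀ - y)/2) ≠ 0 :=
        hsinne y (by linarith) (by linarith) (by intro he; rw [he] at hyx; exact lt_irrefl _ hyx)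
      have hsq := hsqpos y hne
      have habs : |(x₀ - y)/2| < θ := by
        rw [abs_of_neg (by linarith)]; linarith
      have hlt : sq y < Real.sin θ ^ 2 := aux_sin_sq_lt' habs hθ2.le
      have hKc : c < 1 / sq y := one_div_lt_one_div_of_lt hsq hlt
      simp only [hψ_def, hφ_def]
      rw [max_eq_right (by linarith), div_eq_mul_one_div]
      nlinarith [mul_pos ((half_pos hv).trans hGy) (sub_pos.2 hKc)]
    · -- the maximum is also attained at x₀ + δ : gain just outside
      have hfp : G (x₀ + δ) = 0 := by
        have h1 := hmax (x₀ + δ)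
        have h2 := not_lt.1 hcase
        simp only [hG_def]; rw [← hM]; linarith
      have hop : IsOpen (G ⁻¹' Iio (A/2)) := isOpen_Iio.preimage hGcont
      have hmem : (x₀ + δ) ∈ G ⁻¹' Iio (A/2) := by
        simp only [Set.mem_preimage, Set.mem_Iio]; rw [hfp]; linarith
      obtain ⟨r, hr0, hball⟩ := Metric.isOpen_iff.1 hop _ hmem
      have hρ0 : 0 < min (r/2) ((π - δ)/2) := lt_min (by linarith) (by linarith)
      set ρ := min (r/2) ((π - δ)/2) with hρ_def
      have hρδ : ρ ≤ (π - δ)/2 := min_le_right _ _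
      have hρr : ρ ≤ r/2 := min_le_left _ _
      refine ⟨x₀ + δ + ρ/2, x₀ + δ + ρ, by linarith, by linarith, by linarith, ?_⟩
      intro y hy
      obtain ⟨hy1, hy2⟩ := hy
      have hGy : G y < A/2 := by
        have : y ∈ Metric.ball (x₀ + δ) r := by
          rw [Metric.mem_ball, Real.dist_eq, abs_lt]
          constructor <;> linarith
        exact hball this
      have hyx : x₀ < y := by linarith
      have hne : Real.sin ((x₀ - y)/2) ≠ 0 :=
        hsinne y (by linarith) (by linarith) (by intro he; rw [he] at hyx; exact lt_irrefl _ hyx)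
      have hsq := hsqpos y hne
      have habs : θ < |(x₀ - y)/2| := by
        rw [abs_of_neg (by linarith)]; linarith
      have habs2 : |(x₀ - y)/2| ≤ π/2 := by
        rw [abs_of_neg (by linarith)]; linarith
      have hlt : Real.sin θ ^ 2 < sq y := aux_sin_sq_lt hθ0.le habs habs2
      have hKc : 1 / sq y < c := one_div_lt_one_div_of_lt (pow_pos hsθ 2) hlt
      simp only [hψ_def, hφ_def]
      rw [max_eq_left (by linarith), show G y / sq y = G y * (1 / sq y) from div_eq_mul_one_div _ _]
      nlinarith [mul_pos (sub_pos.2 (hGy.trans (half_lt_self hA))) (sub_pos.2 (show 1 / sq y < c from hKc))]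
  set η := ∫ y in a..b, (G y / sq y - ψ y) with hη_def
  have hη0 : 0 < η := by
    rw [hη_def]
    have hnab : ∀ y ∈ Icc a b, Real.sin ((x₀ - y)/2) ≠ 0 :=
      hne_seg a b (by linarith) hb (Or.inr (by linarith))
    obtain ⟨h1, h2, _, _⟩ := hpack _ hnab
    apply intervalIntegral.intervalIntegral_pos_of_pos_on
    · apply ContinuousOn.intervalIntegrable
      rw [uIcc_of_le hab.le]
      exact h1.sub h2
    · intro x hx
      have := hstrict x (Ioo_subset_Icc_self hx)
      linarith
    · exact hab
  -- main estimate
  have hmain : ∀ ε : ℝ, 0 < ε → ε ≤ δ/2 →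
      4*A*(Real.cos θ / Real.sin θ) + η - 2*c*ε*A ≤
        ∫ y in Set.Ioo (x₀ - π) (x₀ + π) \ Set.Ioo (x₀ - ε) (x₀ + ε),
          (f x₀ - f y) / (Real.sin ((x₀ - y)/2))^2 := by
    intro ε hε0 hεδ
    show 4*A*(Real.cos θ / Real.sin θ) + η - 2*c*ε*A ≤
        ∫ y in Set.Ioo (x₀ - π) (x₀ + π) \ Set.Ioo (x₀ - ε) (x₀ + ε), G y / sq y
    have hεπ : ε < π := by linarith
    have hneL : ∀ y ∈ Icc (x₀-π) (x₀-ε), Real.sin ((x₀ - y)/2) ≠ 0 :=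
      hne_seg _ _ le_rfl (by linarith) (Or.inl (by linarith))
    have hneR : ∀ y ∈ Icc (x₀+ε) (x₀+π), Real.sin ((x₀ - y)/2) ≠ 0 :=
      hne_seg _ _ (by linarith) le_rfl (Or.inr (by linarith))
    obtain ⟨hhL, hψL, hφL, hKL⟩ := hpack _ hneL
    obtain ⟨hhR, hψR, hφR, hKR⟩ := hpack _ hneR
    have hSeq : Set.Ioo (x₀ - π) (x₀ + π) \ Set.Ioo (x₀ - ε) (x₀ + ε)
        = Set.Ioc (x₀ - π) (x₀ - ε) ∪ Set.Ico (x₀ + ε) (x₀ + π) := by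
      ext y
      simp only [Set.mem_diff, Set.mem_Ioo, Set.mem_union, Set.mem_Ioc, Set.mem_Ico,
        not_and, not_lt]
      constructor
      · rintro ⟨⟨h1, h2⟩, h3⟩
        rcases le_or_gt y (x₀ - ε) with h | h
        · exact Or.inl ⟨h1, h⟩
        · exact Or.inr ⟨h3 h, h2⟩
      · rintro (⟨h1, h2⟩ | ⟨h1, h2⟩)
        · exact ⟨⟨h1, by linarith⟩, fun h' => by linarith⟩
        · exact ⟨⟨by linarith, h2⟩, fun h' => by linarith⟩
    have hdisj : Disjoint (Set.Ioc (x₀ - π) (x₀ - ε)) (Set.Ico (x₀ + ε) (x₀ + π)) := by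
      rw [Set.disjoint_left]
      rintro y ⟨_, h1⟩ ⟨h2, _⟩
      linarith
    have hiL : IntegrableOn (fun y => G y / sq y) (Set.Ioc (x₀-π) (x₀-ε)) volume :=
      (hhL.integrableOn_Icc).mono_set Set.Ioc_subset_Icc_self
    have hiR : IntegrableOn (fun y => G y / sq y) (Set.Ico (x₀+ε) (x₀+π)) volume :=
      (hhR.integrableOn_Icc).mono_set Set.Ico_subset_Icc_self
    have hsplit : ∫ y in Set.Ioo (x₀ - π) (x₀ + π) \ Set.Ioo (x₀ - ε) (x₀ + ε), G y / sq y
        = (∫ y in (x₀-π)..(x₀-ε), G y / sq y) + ∫ y in (x₀+ε)..(x₀+π), G y / sq y := by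
      rw [hSeq, MeasureTheory.setIntegral_union hdisj measurableSet_Ico hiL hiR,
        MeasureTheory.integral_Ico_eq_integral_Ioo, ← MeasureTheory.integral_Ioc_eq_integral_Ioo,
        ← intervalIntegral.integral_of_le (show x₀ - π ≤ x₀ - ε by linarith),
        ← intervalIntegral.integral_of_le (show x₀ + ε ≤ x₀ + π by linarith)]
    rw [hsplit]
    have hintL : IntervalIntegrable (fun y => G y / sq y) volume (x₀-π) (x₀-ε) := by
      apply ContinuousOn.intervalIntegrable; rwa [uIcc_of_le (by linarith)]
    have hintR : IntervalIntegrable (fun y => G y / sq y) volume (x₀+ε) (x₀+π) := by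
      apply ContinuousOn.intervalIntegrable; rwa [uIcc_of_le (by linarith)]
    have hψintL : IntervalIntegrable ψ volume (x₀-π) (x₀-ε) := by
      apply ContinuousOn.intervalIntegrable; rwa [uIcc_of_le (by linarith)]
    have hψintR : IntervalIntegrable ψ volume (x₀+ε) (x₀+π) := by
      apply ContinuousOn.intervalIntegrable; rwa [uIcc_of_le (by linarith)]
    have hφintL : IntervalIntegrable φ volume (x₀-π) (x₀-ε) := by
      apply ContinuousOn.intervalIntegrable; rwa [uIcc_of_le (by linarith)]
    have hφintR : IntervalIntegrable φ volume (x₀+ε) (x₀+π) := by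
      apply ContinuousOn.intervalIntegrable; rwa [uIcc_of_le (by linarith)]
    have hL1 : ∫ y in (x₀-π)..(x₀-ε), ψ y ≤ ∫ y in (x₀-π)..(x₀-ε), G y / sq y :=
      intervalIntegral.integral_mono_on (by linarith) hψintL hintL
        (fun y hy => hkey y (hneL y hy))
    have hsubR : ∀ p q : ℝ, x₀ + ε ≤ p → q ≤ x₀ + π → p ≤ q →
        IntervalIntegrable (fun y => G y / sq y - ψ y) volume p q := by
      intro p q hp hq hpq
      apply ContinuousOn.intervalIntegrable
      rw [uIcc_of_le hpq]
      exact (hhR.sub hψR).mono (Set.Icc_subset_Icc hp hq)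
    have hεa : x₀ + ε ≤ a := by linarith
    have haπ : a ≤ x₀ + π := by linarith
    have h2a : 0 ≤ ∫ y in (x₀+ε)..a, (G y / sq y - ψ y) :=
      intervalIntegral.integral_nonneg hεa
        (fun u hu => sub_nonneg.2 (hkey u (hneR u ⟨hu.1, by linarith [hu.2]⟩)))
    have h2b : 0 ≤ ∫ y in b..(x₀+π), (G y / sq y - ψ y) :=
      intervalIntegral.integral_nonneg hb
        (fun u hu => sub_nonneg.2 (hkey u (hneR u ⟨by linarith [hu.1], hu.2⟩)))
    have e1 : (∫ y in (x₀+ε)..a, (G y / sq y - ψ y)) + ∫ y in a..b, (G y / sq y - ψ y)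
        = ∫ y in (x₀+ε)..b, (G y / sq y - ψ y) :=
      intervalIntegral.integral_add_adjacent_intervals
        (hsubR _ _ le_rfl haπ hεa) (hsubR a b (by linarith) (by linarith) hab.le)
    have e2 : (∫ y in (x₀+ε)..b, (G y / sq y - ψ y)) + ∫ y in b..(x₀+π), (G y / sq y - ψ y)
        = ∫ y in (x₀+ε)..(x₀+π), (G y / sq y - ψ y) :=
      intervalIntegral.integral_add_adjacent_intervals
        (hsubR _ _ le_rfl (by linarith) (by linarith)) (hsubR b _ (by linarith) le_rfl hb)
    have e3 : ∫ y in (x₀+ε)..(x₀+π), (G y / sq y - ψ y)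
        = (∫ y in (x₀+ε)..(x₀+π), G y / sq y) - ∫ y in (x₀+ε)..(x₀+π), ψ y :=
      intervalIntegral.integral_sub hintR hψintR
    have hR1 : (∫ y in (x₀+ε)..(x₀+π), ψ y) + η ≤ ∫ y in (x₀+ε)..(x₀+π), G y / sq y := by
      rw [hη_def]
      linarith [e1, e2, e3, h2a, h2b]
    have hGint : ∀ p q : ℝ, IntervalIntegrable G volume p q :=
      fun p q => hGcont.intervalIntegrable p q
    have hψeqL : ∫ y in (x₀-π)..(x₀-ε), ψ y
        = c * (∫ y in (x₀-π)..(x₀-ε), G y) - A * ∫ y in (x₀-π)..(x₀-ε), φ y := by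
      simp only [hψ_def]
      rw [intervalIntegral.integral_sub ((hGint _ _).const_mul c) (hφintL.const_mul A),
        intervalIntegral.integral_const_mul, intervalIntegral.integral_const_mul]
    have hψeqR : ∫ y in (x₀+ε)..(x₀+π), ψ y
        = c * (∫ y in (x₀+ε)..(x₀+π), G y) - A * ∫ y in (x₀+ε)..(x₀+π), φ y := by
      simp only [hψ_def]
      rw [intervalIntegral.integral_sub ((hGint _ _).const_mul c) (hφintR.const_mul A),
        intervalIntegral.integral_const_mul, intervalIntegral.integral_const_mul]
    have hEqL : EqOn φ (fun _ => (0:ℝ)) (uIcc (x₀-δ) (x₀-ε)) := by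
      intro y hy
      rw [uIcc_of_le (by linarith)] at hy
      exact hφzero y hy.1 (by linarith [hy.2]) (by intro he; rw [he] at hy; linarith [hy.2])
    have hEqR : EqOn φ (fun _ => (0:ℝ)) (uIcc (x₀+ε) (x₀+δ)) := by
      intro y hy
      rw [uIcc_of_le (by linarith)] at hy
      exact hφzero y (by linarith [hy.1]) hy.2 (by intro he; rw [he] at hy; linarith [hy.1])
    have hφmidL : ∫ y in (x₀-δ)..(x₀-ε), φ y = 0 := by
      rw [intervalIntegral.integral_congr hEqL, intervalIntegral.integral_zero]
    have hφmidR : ∫ y in (x₀+ε)..(x₀+δ), φ y = 0 := by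
      rw [intervalIntegral.integral_congr hEqR, intervalIntegral.integral_zero]
    have hφImid : IntervalIntegrable φ volume (x₀-δ) (x₀-ε) := by
      apply ContinuousOn.intervalIntegrable
      rw [uIcc_of_le (by linarith)]
      exact (hpack _ (hne_seg _ _ (by linarith) (by linarith) (Or.inl (by linarith)))).2.2.1
    have hφImid' : IntervalIntegrable φ volume (x₀+ε) (x₀+δ) := by
      apply ContinuousOn.intervalIntegrable
      rw [uIcc_of_le (by linarith)]
      exact (hpack _ (hne_seg _ _ (by linarith) (by linarith) (Or.inr (by linarith)))).2.2.1
    have hφIL' : IntervalIntegrable φ volume (x₀-π) (x₀-δ) := by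
      apply ContinuousOn.intervalIntegrable
      rw [uIcc_of_le (by linarith)]
      exact (hpack _ hne_left).2.2.1
    have hφIR' : IntervalIntegrable φ volume (x₀+δ) (x₀+π) := by
      apply ContinuousOn.intervalIntegrable
      rw [uIcc_of_le (by linarith)]
      exact (hpack _ hne_right).2.2.1
    have hφL_tot : ∫ y in (x₀-π)..(x₀-ε), φ y = c*(π-δ) - 2*(Real.cos θ / Real.sin θ) := by
      have h := intervalIntegral.integral_add_adjacent_intervals hφIL' hφImid
      rw [hφ_left, hφmidL] at h
      linarith [h]
    have hφR_tot : ∫ y in (x₀+ε)..(x₀+π), φ y = c*(π-δ) - 2*(Real.cos θ / Real.sin θ) := by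
      have h := intervalIntegral.integral_add_adjacent_intervals hφImid' hφIR'
      rw [hφ_right, hφmidR] at h
      linarith [h]
    have hGadj1 : (∫ y in (x₀-π)..(x₀-ε), G y) + ∫ y in (x₀-ε)..(x₀+ε), G y
        = ∫ y in (x₀-π)..(x₀+ε), G y :=
      intervalIntegral.integral_add_adjacent_intervals (hGint _ _) (hGint _ _)
    have hGadj2 : (∫ y in (x₀-π)..(x₀+ε), G y) + ∫ y in (x₀+ε)..(x₀+π), G y
        = ∫ y in (x₀-π)..(x₀+π), G y :=
      intervalIntegral.integral_add_adjacent_intervals (hGint _ _) (hGint _ _)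
    have hGmid : ∫ y in (x₀-ε)..(x₀+ε), G y ≤ 2*ε*A := by
      have h := intervalIntegral.integral_mono_on (show x₀-ε ≤ x₀+ε by linarith)
        (hGint _ _) (intervalIntegrable_const (c := A)) (fun y _ => hGA y)
      rw [intervalIntegral.integral_const, smul_eq_mul] at h
      calc ∫ y in (x₀-ε)..(x₀+ε), G y ≤ (x₀+ε - (x₀-ε)) * A := h
        _ = 2*ε*A := by ring
    have hGsum : 2*π*M - 2*π*fbar - 2*ε*A ≤
        (∫ y in (x₀-π)..(x₀-ε), G y) + ∫ y in (x₀+ε)..(x₀+π), G y := by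
      linarith [hGadj1, hGadj2, hGmid, hIG]
    have hident : 2*π*M - 2*π*fbar = 2*A*(π-δ) := by
      rw [hδ_def, hθ_def, hA_def]
      have hMm' : M - m ≠ 0 := by linarith
      field_simp
      ring
    have hCsum : 2*c*A*(π-δ) - 2*c*ε*A ≤
        c * (∫ y in (x₀-π)..(x₀-ε), G y) + c * ∫ y in (x₀+ε)..(x₀+π), G y := by
      have h := mul_le_mul_of_nonneg_left hGsum hc0.le
      have h2 : c * (2*π*M - 2*π*fbar - 2*ε*A) = 2*c*A*(π-δ) - 2*c*ε*A := by
        rw [show (2:ℝ)*π*M - 2*π*fbar - 2*ε*A = 2*A*(π-δ) - 2*ε*A by linarith [hident]]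
        ring
      rw [h2] at h
      linarith [h]
    rw [hφL_tot] at hψeqL
    rw [hφR_tot] at hψeqR
    clear_value A θ δ c G sq φ ψ η
    linarith [hL1, hR1, hψeqL, hψeqR, hCsum]
  -- pass to the limit
  have hε₀ : 0 < min (δ/2) (η/(4*c*A)) :=
    lt_min (by linarith) (div_pos hη0 (by positivity))
  have hev : ∀ᶠ ε in 𝓝[>] (0:ℝ),
      A/π * (Real.cos θ / Real.sin θ) + η/(8*π) ≤
      (1/(4*π)) * ∫ y in Set.Ioo (x₀ - π) (x₀ + π) \ Set.Ioo (x₀ - ε) (x₀ + ε),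
          (f x₀ - f y) / (Real.sin ((x₀ - y)/2))^2 := by
    filter_upwards [Ioo_mem_nhdsGT_of_mem (Set.mem_Ico.2 ⟨le_refl 0, hε₀⟩)] with ε hε
    obtain ⟨hε1, hε2⟩ := Set.mem_Ioo.1 hε
    have h1 := hmain ε hε1 (le_trans hε2.le (min_le_left _ _))
    have h2 : ε ≤ η/(4*c*A) := le_trans hε2.le (min_le_right _ _)
    have h3 : 2*c*ε*A ≤ η/2 := by
      rw [le_div_iff₀ (by positivity : (0:ℝ) < 4*c*A)] at h2
      nlinarith [h2]
    have h4 : 4*A*(Real.cos θ / Real.sin θ) + η/2 ≤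
        ∫ y in Set.Ioo (x₀ - π) (x₀ + π) \ Set.Ioo (x₀ - ε) (x₀ + ε),
          (f x₀ - f y) / (Real.sin ((x₀ - y)/2))^2 := by linarith
    have h5 : (0:ℝ) < 1/(4*π) := by positivity
    calc A/π * (Real.cos θ / Real.sin θ) + η/(8*π)
        = (1/(4*π)) * (4*A*(Real.cos θ / Real.sin θ) + η/2) := by field_simp; ring
      _ ≤ _ := by
          apply mul_le_mul_of_nonneg_left h4 h5.le
  have hle := ge_of_tendsto hL hev
  have : 0 < η/(8*π) := by positivity
  linarith
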